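/- Let β₂ be a satisfiable finite set of atomic comparisons over V and let D₁, …, Dₖ be finite nonempty sets of ACs over V. If β₂ entails the disjunction ⋁ᵢ (⋀ Dᵢ), then there exists i such that β₂ entails every equality AC occurring in Dᵢ, i.e., every member of Dᵢ of the form X = Y (for variables X, Y) or X = c (for a variable X and real constant c). -/
import Mathlib


namespace QC

/-- A term is a variable in `V` or a real constant. -/
inductive Term (V : Type) where
  | var : V → Term V
  | const : ℝ → Term V

/-- The comparison relations `<, ≤, =, ≠`. -/
inductive Rel where
  | lt | le | eq | ne

/-- A comparison between two terms.  (`x ≥ c` is represented as `c ≤ x`, etc.) -/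
structure Comp (V : Type) where
  rel : Rel
  lhs : Term V
  rhs : Term V

def Term.eval {V : Type} (σ : V → ℝ) : Term V → ℝ
  | .var x => σ x
  | .const c => c

def Rel.holds : Rel → ℝ → ℝ → Prop
  | .lt => fun a b => a < b
  | .le => fun a b => a ≤ b
  | .eq => fun a b => a = b
  | .ne => fun a b => a ≠ b

/-- An assignment `σ : V → ℝ` satisfies a comparison. -/
def Comp.holds {V : Type} (a : Comp V) (σ : V → ℝ) : Prop :=
  a.rel.holds (a.lhs.eval σ) (a.rhs.eval σ)

def Term.isVar {V : Type} : Term V → Prop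
  | .var _ => True
  | .const _ => False

/-- An atomic comparison: at least one side is a variable. -/
def IsAC {V : Type} (a : Comp V) : Prop := a.lhs.isVar ∨ a.rhs.isVar

/-- `σ` satisfies every comparison in the finite set `F`. -/
def Sat {V : Type} (F : Finset (Comp V)) (σ : V → ℝ) : Prop := ∀ a ∈ F, a.holds σ

lemma eval_mix {V : Type} (σ σ' : V → ℝ) (t : ℝ) (u : Term V) :
    u.eval (fun x => (1-t)*σ x + t*σ' x) = (1-t)*u.eval σ + t*u.eval σ' := by
  cases u <;> simp [Term.eval] <;> ring

lemma affine_zero (d₀ d₁ t : ℝ) (h : (1-t)*d₀ + t*d₁ = 0) (hne : d₀ ≠ 0 ∨ d₁ ≠ 0) :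
    t = d₀ / (d₀ - d₁) := by
  by_cases hd : d₀ = d₁
  · subst hd
    exfalso
    rcases hne with h0 | h0 <;> apply h0 <;> linarith
  · rw [eq_div_iff (sub_ne_zero.mpr hd)]
    linarith

noncomputable def bval {V : Type} (σ σ' : V → ℝ) (a : Comp V) : ℝ :=
  (a.rhs.eval σ - a.lhs.eval σ) / ((a.rhs.eval σ - a.lhs.eval σ) - (a.rhs.eval σ' - a.lhs.eval σ'))

lemma combine {V : Type} (β₂ : Finset (Comp V)) (σ σ' : V → ℝ)
    (h : Sat β₂ σ) (h' : Sat β₂ σ') (T : Finset (Comp V))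
    (hT : ∀ a ∈ T, a.rel = Rel.eq ∧ (¬ a.holds σ ∨ ¬ a.holds σ')) :
    ∃ τ, Sat β₂ τ ∧ ∀ a ∈ T, ¬ a.holds τ := by
  classical
  obtain ⟨t, htI, htB⟩ : ∃ t ∈ Set.Ioo (0:ℝ) 1, t ∉ ((β₂ ∪ T).image (bval σ σ') : Finset ℝ) := by
    have hinf : (Set.Ioo (0:ℝ) 1).Infinite := Set.Ioo_infinite (by norm_num)
    have := (hinf.diff (((β₂ ∪ T).image (bval σ σ')).finite_toSet)).nonempty
    obtain ⟨t, ht⟩ := this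
    exact ⟨t, ht.1, by simpa using ht.2⟩
  obtain ⟨ht0, ht1⟩ := htI
  refine ⟨fun x => (1-t)*σ x + t*σ' x, ?_, ?_⟩
  · intro a ha
    have h0 := h a ha
    have h1 := h' a ha
    unfold Comp.holds at *
    rw [eval_mix, eval_mix]
    cases hrel : a.rel <;> rw [hrel] at h0 h1 <;> simp only [Rel.holds] at h0 h1 ⊢
    · nlinarith
    · nlinarith
    · rw [h0, h1]
    · intro heq
      apply htB
      have hz : (1-t)*(a.rhs.eval σ - a.lhs.eval σ) + t*(a.rhs.eval σ' - a.lhs.eval σ') = 0 := by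
        linarith
      have := affine_zero _ _ t hz (Or.inl (sub_ne_zero.mpr (Ne.symm h0)))
      refine Finset.mem_image.mpr ⟨a, Finset.mem_union_left _ ha, ?_⟩
      rw [bval, ← this]
  · intro a ha hh
    obtain ⟨hrel, hv⟩ := hT a ha
    unfold Comp.holds at hh
    rw [hrel] at hh
    unfold Rel.holds at hh
    rw [eval_mix, eval_mix] at hh
    have hz : (1-t)*(a.rhs.eval σ - a.lhs.eval σ) + t*(a.rhs.eval σ' - a.lhs.eval σ') = 0 := by
      linarith
    have hne : (a.rhs.eval σ - a.lhs.eval σ) ≠ 0 ∨ (a.rhs.eval σ' - a.lhs.eval σ') ≠ 0 := by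
      rcases hv with hv | hv
      · left
        intro hc
        apply hv
        unfold Comp.holds
        rw [hrel]
        unfold Rel.holds
        linarith
      · right
        intro hc
        apply hv
        unfold Comp.holds
        rw [hrel]
        unfold Rel.holds
        linarith
    have := affine_zero _ _ t hz hne
    apply htB
    refine Finset.mem_image.mpr ⟨a, Finset.mem_union_right _ ha, ?_⟩
    rw [bval, ← this]

/-- lem-eq-directly: if a satisfiable `β₂` entails `⋁ᵢ (⋀ Dᵢ)`,
then for some `i` every equality AC in `Dᵢ` (of the form `X = Y` or `X = c`) is
entailed by `β₂`. -/
theorem stmt12 {V : Type} (β₂ : Finset (Comp V))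
    (hAC : ∀ a ∈ β₂, IsAC a)
    (hsat : ∃ σ : V → ℝ, Sat β₂ σ)
    (k : ℕ) (D : Fin k → Finset (Comp V))
    (hDne : ∀ i, (D i).Nonempty)
    (hDAC : ∀ i, ∀ a ∈ D i, IsAC a)
    (hent : ∀ σ : V → ℝ, Sat β₂ σ → ∃ i, ∀ a ∈ D i, a.holds σ) :
    ∃ i, ∀ a ∈ D i,
      ((∃ X Y : V, a = ⟨Rel.eq, Term.var X, Term.var Y⟩) ∨
        (∃ (X : V) (c : ℝ), a = ⟨Rel.eq, Term.var X, Term.const c⟩)) →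
      ∀ σ : V → ℝ, Sat β₂ σ → a.holds σ := by
  classical
  by_contra hcon
  push_neg at hcon
  choose a ha hP σs hσ hviol using hcon
  have hrel : ∀ i, (a i).rel = Rel.eq := by
    intro i
    rcases hP i with ⟨X, Y, h⟩ | ⟨X, c, h⟩ <;> rw [h]
  have claim : ∀ s : Finset (Fin k), ∃ τ, Sat β₂ τ ∧ ∀ i ∈ s, ¬ (a i).holds τ := by
    intro s
    induction s using Finset.induction_on with
    | empty => obtain ⟨σ, hσ0⟩ := hsat; exact ⟨σ, hσ0, by simp⟩
    | @insert j s hj ih =>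
      obtain ⟨τ, hτ, hτv⟩ := ih
      have hTc : ∀ b ∈ (insert j s).image a, b.rel = Rel.eq ∧ (¬ b.holds τ ∨ ¬ b.holds (σs j)) := by
        intro b hb
        obtain ⟨i, hi, rfl⟩ := Finset.mem_image.mp hb
        refine ⟨hrel i, ?_⟩
        rcases Finset.mem_insert.mp hi with rfl | hi'
        · exact Or.inr (hviol i)
        · exact Or.inl (hτv i hi')
      obtain ⟨τ', hτ', hτv'⟩ := combine β₂ τ (σs j) hτ (hσ j) ((insert j s).image a) hTc
      exact ⟨τ', hτ', fun i hi => hτv' (a i) (Finset.mem_image_of_mem a hi)⟩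
  obtain ⟨τ, hτ, hτv⟩ := claim Finset.univ
  obtain ⟨i, hi⟩ := hent τ hτ
  exact hτv i (Finset.mem_univ i) (hi (a i) (ha i))


end QC
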